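/- Let n be a finite type, G : Matrix n n ℂ a Hermitian matrix all of whose eigenvalues lie in the real interval [α, β], and p : Polynomial ℂ. Then, with respect to the ℓ²→ℓ² operator norm on Matrix n n ℂ, ‖exp(-i G) - p(G)‖ ≤ sup_{x ∈ [α, β]} ‖exp(-i x) - p.eval x‖, where p(G) denotes evaluation of p at G via the polynomial algebra map. -/

import Mathlib

open scoped Matrix.Norms.L2Operator

/-- Conjugation by an invertible element commutes with polynomial evaluation. -/
lemma aux_aeval_conj {R A : Type*} [CommSemiring R] [Semiring A] [Algebra R A]
    (U V x : A) (hUV : U * V = 1) (hVU : V * U = 1) (p : Polynomial R) :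
    Polynomial.aeval (U * x * V) p = U * Polynomial.aeval x p * V := by
  induction p using Polynomial.induction_on' with
  | add f g hf hg => rw [map_add, map_add, hf, hg, mul_add, add_mul]
  | monomial k a =>
    have hpow : ∀ m : ℕ, (U * x * V) ^ m = U * x ^ m * V := by
      intro m
      induction m with
      | zero => simpa using hUV.symm
      | succ m ih =>
        rw [pow_succ, pow_succ, ih]
        simp only [mul_assoc]
        rw [← mul_assoc V U _, hVU, one_mul]
    rw [Polynomial.aeval_monomial, Polynomial.aeval_monomial, hpow, ← mul_assoc,
      ← mul_assoc, Algebra.commutes a U, mul_assoc U ((algebraMap R A) a) (x ^ k)]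

/-- The ℓ²→ℓ² operator norm of a diagonal matrix is bounded by any uniform bound
on the absolute values of the entries. -/
lemma aux_l2_opNorm_diagonal_le {n : Type*} [Fintype n] [DecidableEq n]
    (d : n → ℂ) (C : ℝ) (hC : 0 ≤ C) (h : ∀ i, ‖d i‖ ≤ C) :
    ‖Matrix.diagonal d‖ ≤ C := by
  rw [Matrix.l2_opNorm_def]
  refine ContinuousLinearMap.opNorm_le_bound _ hC fun x => ?_
  have hx : ∀ (y : EuclideanSpace ℂ n), ‖y‖ = Real.sqrt (∑ i, ‖y i‖ ^ 2) := by
    intro y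
    rw [EuclideanSpace.norm_eq]
  rw [hx, hx]
  rw [← Real.sqrt_sq hC, ← Real.sqrt_mul (by positivity)]
  apply Real.sqrt_le_sqrt
  rw [Finset.mul_sum]
  apply Finset.sum_le_sum
  intro i _
  have happ : (LinearEquiv.trans Matrix.toEuclideanLin
      LinearMap.toContinuousLinearMap (Matrix.diagonal d) x) i = d i * x i := by
    simp [Matrix.toEuclideanLin_apply, Matrix.mulVec_diagonal]
  rw [happ, norm_mul, mul_pow]
  have := h i
  have h2 : ‖d i‖ ^ 2 ≤ C ^ 2 := by
    apply pow_le_pow_left₀ (norm_nonneg _) this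
  nlinarith [sq_nonneg (‖x i‖), norm_nonneg (x i)]

/-- Spectral transfer: for Hermitian `G` with eigenvalues in `[α, β]` and a polynomial `p`,
the ℓ²→ℓ² operator norm of `exp(-iG) - p(G)` is bounded by the sup of
`‖e^{-ix} - p(x)‖` over `x ∈ [α, β]`. -/
theorem stmt_8 {n : Type*} [Fintype n] [DecidableEq n]
    (G : Matrix n n ℂ) (hG : G.IsHermitian) (α β : ℝ)
    (heig : ∀ i, hG.eigenvalues i ∈ Set.Icc α β)
    (p : Polynomial ℂ) :
    ‖NormedSpace.exp ((-Complex.I) • G) - Polynomial.aeval G p‖ ≤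
      ⨆ x ∈ Set.Icc α β, ‖Complex.exp (-Complex.I * (x : ℂ)) - p.eval (x : ℂ)‖ := by
  classical
  set f : ℝ → ℝ := fun x => ‖Complex.exp (-Complex.I * (x : ℂ)) - p.eval (x : ℂ)‖ with hf
  set g : ℝ → ℝ := fun x => ⨆ _ : x ∈ Set.Icc α β, f x with hg
  have hcont : ContinuousOn f (Set.Icc α β) := by
    apply Continuous.continuousOn
    apply Continuous.norm
    apply Continuous.sub
    · exact Complex.continuous_exp.comp (by continuity)
    · exact p.continuous_aeval.comp Complex.continuous_ofReal
  -- boundedness of g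
  obtain ⟨M, hM⟩ := (isCompact_Icc.image_of_continuousOn hcont).bddAbove
  have hgle : ∀ x, g x ≤ max M 0 := by
    intro x
    by_cases hx : x ∈ Set.Icc α β
    · rw [hg]
      simp only []
      rw [ciSup_pos hx]
      exact le_max_of_le_left (hM ⟨x, hx, rfl⟩)
    · rw [hg]
      simp only []
      have : IsEmpty (x ∈ Set.Icc α β) := ⟨hx⟩
      rw [Real.iSup_of_isEmpty]
      exact le_max_right _ _
  have hbdd : BddAbove (Set.range g) := ⟨max M 0, by rintro y ⟨x, rfl⟩; exact hgle x⟩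
  have hgnonneg : ∀ x, 0 ≤ g x := by
    intro x
    by_cases hx : x ∈ Set.Icc α β
    · rw [hg]; simp only []; rw [ciSup_pos hx]; exact norm_nonneg _
    · rw [hg]; simp only []
      have : IsEmpty (x ∈ Set.Icc α β) := ⟨hx⟩
      rw [Real.iSup_of_isEmpty]
  have hCnonneg : 0 ≤ ⨆ x, g x := le_trans (hgnonneg α) (le_ciSup hbdd α)
  -- each eigenvalue value is bounded by the sup
  have hkey : ∀ i, f (hG.eigenvalues i) ≤ ⨆ x, g x := by
    intro i
    have h1 : f (hG.eigenvalues i) = g (hG.eigenvalues i) := by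
      rw [hg]; simp only []; rw [ciSup_pos (heig i)]
    rw [h1]
    exact le_ciSup hbdd _
  -- spectral decomposition
  set U : Matrix n n ℂ := (hG.eigenvectorUnitary : Matrix n n ℂ) with hU
  have hUmem : U ∈ Matrix.unitaryGroup n ℂ := hG.eigenvectorUnitary.2
  have hsUU : star U * U = 1 := (Matrix.mem_unitaryGroup_iff').mp hUmem
  have hUsU : U * star U = 1 := (Matrix.mem_unitaryGroup_iff).mp hUmem
  have hUinv : U⁻¹ = star U := Matrix.inv_eq_left_inv hsUU
  have hUunit : IsUnit U := by
    exact Matrix.isUnit_iff_isUnit_det U |>.mpr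
      (by
        have := congrArg Matrix.det hUsU
        rw [Matrix.det_mul, Matrix.det_one] at this
        exact IsUnit.of_mul_eq_one _ this)
  set D : Matrix n n ℂ := Matrix.diagonal ((fun x : ℝ => (x : ℂ)) ∘ hG.eigenvalues) with hD
  have hspec : G = U * D * star U := hG.spectral_theorem
  -- exp part
  have hexp : NormedSpace.exp ((-Complex.I) • G) =
      U * Matrix.diagonal (fun i => Complex.exp (-Complex.I * (hG.eigenvalues i : ℂ))) * star U := by
    have hsmul : (-Complex.I) • G = U * ((-Complex.I) • D) * U⁻¹ := by
      rw [hspec, hUinv, Matrix.mul_smul, Matrix.smul_mul]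
    rw [hsmul, Matrix.exp_conj U _ hUunit, hUinv]
    congr 1
    congr 1
    have : (-Complex.I) • D =
        Matrix.diagonal (fun i => -Complex.I * (hG.eigenvalues i : ℂ)) := by
      ext i j
      by_cases h : i = j <;> simp [hD, Matrix.diagonal_apply, h]
    rw [this, Matrix.exp_diagonal]
    congr 1
    funext i
    rw [Pi.exp_def, Complex.exp_eq_exp_ℂ]
  -- polynomial part
  have haeval : Polynomial.aeval G p =
      U * Matrix.diagonal (fun i => p.eval (hG.eigenvalues i : ℂ)) * star U := by
    conv_lhs => rw [hspec]
    rw [aux_aeval_conj U (star U) D hUsU hsUU]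
    congr 1
    congr 1
    rw [hD]
    have h3 := Polynomial.aeval_algHom_apply
      (Matrix.diagonalAlgHom ℂ : (n → ℂ) →ₐ[ℂ] Matrix n n ℂ)
      ((fun x : ℝ => (x : ℂ)) ∘ hG.eigenvalues) p
    refine h3.trans ?_
    have h5 : (Polynomial.aeval ((fun x : ℝ => (x : ℂ)) ∘ hG.eigenvalues) p)
        = fun i => p.eval (hG.eigenvalues i : ℂ) := by
      funext i
      have h4 := Polynomial.aeval_algHom_apply (Pi.evalAlgHom ℂ (fun _ : n => ℂ) i)
        ((fun x : ℝ => (x : ℂ)) ∘ hG.eigenvalues) p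
      simp only [Pi.evalAlgHom_apply, Function.comp_apply] at h4
      rw [← h4]
      exact congrFun (Polynomial.coe_aeval_eq_eval _) p
    show Matrix.diagonal _ = _
    rw [h5]
  -- combine
  rw [hexp, haeval, ← Matrix.sub_mul, ← Matrix.mul_sub, Matrix.diagonal_sub]
  have hnorm1 : ‖U * (Matrix.diagonal fun i =>
      Complex.exp (-Complex.I * (hG.eigenvalues i : ℂ)) - p.eval (hG.eigenvalues i : ℂ)) * star U‖
      = ‖Matrix.diagonal fun i =>
      Complex.exp (-Complex.I * (hG.eigenvalues i : ℂ)) - p.eval (hG.eigenvalues i : ℂ)‖ := by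
    rw [mul_assoc, CStarRing.norm_mem_unitary_mul _ hUmem,
      CStarRing.norm_mul_mem_unitary _ (Unitary.star_mem hUmem)]
  rw [hnorm1]
  exact aux_l2_opNorm_diagonal_le _ _ hCnonneg hkey
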